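/- The function SNR(α₀) = α₀²P₀(Σᵢ αᵢ|fᵢgᵢ|√Pᵢ/√(1+α₀²|fᵢ|²P₀))² / (1 + Σᵢ αᵢ²|gᵢ|²Pᵢ/(1+α₀²|fᵢ|²P₀)) is strictly increasing in α₀ on (0,1], so it is maximized at α₀ = 1. -/

import Mathlib

lemma aux_frac {c d x y : ℝ} (hc : 0 < c) (hd : 0 < d) (hx : 0 < x) (hxy : x < y) :
    x / Real.sqrt (1 + x ^ 2 * c * d) < y / Real.sqrt (1 + y ^ 2 * c * d) := by
  have hy : 0 < y := hx.trans hxy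
  have h1x : (0:ℝ) < 1 + x ^ 2 * c * d := by positivity
  have h1y : (0:ℝ) < 1 + y ^ 2 * c * d := by positivity
  rw [div_lt_div_iff₀ (Real.sqrt_pos.mpr h1x) (Real.sqrt_pos.mpr h1y)]
  have ex : x * Real.sqrt (1 + y ^ 2 * c * d) = Real.sqrt (x ^ 2 * (1 + y ^ 2 * c * d)) := by
    rw [Real.sqrt_mul (by positivity), Real.sqrt_sq hx.le]
  have ey : y * Real.sqrt (1 + x ^ 2 * c * d) = Real.sqrt (y ^ 2 * (1 + x ^ 2 * c * d)) := by
    rw [Real.sqrt_mul (by positivity), Real.sqrt_sq hy.le]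
  rw [ex, ey]
  apply Real.sqrt_lt_sqrt (by positivity)
  nlinarith [mul_pos hx hy, sq_nonneg (x*y)]

set_option maxHeartbeats 1600000 in
/-- The receive SNR of a two-step amplify-and-forward relay network
with no direct link is strictly increasing in the transmitter power fraction
`α₀` on `(0,1]`, hence maximized at `α₀ = 1`. -/
theorem stmt_0 (R : ℕ) (hR : 1 ≤ R) (P0 : ℝ) (hP0 : 0 < P0)
    (P f g α : Fin R → ℝ)
    (hP : ∀ i, 0 < P i) (hf : ∀ i, 0 < f i) (hg : ∀ i, 0 < g i)
    (hα : ∀ i, α i ∈ Set.Ioc (0 : ℝ) 1)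
    (SNR : ℝ → ℝ)
    (hSNR : ∀ a0 : ℝ, SNR a0 =
      a0 ^ 2 * P0 *
        (∑ i, α i * (f i * g i) * Real.sqrt (P i) /
            Real.sqrt (1 + a0 ^ 2 * (f i) ^ 2 * P0)) ^ 2 /
        (1 + ∑ i, (α i) ^ 2 * (g i) ^ 2 * P i / (1 + a0 ^ 2 * (f i) ^ 2 * P0))) :
    StrictMonoOn SNR (Set.Ioc 0 1) ∧
      ∀ a0 ∈ Set.Ioc (0 : ℝ) 1, SNR a0 ≤ SNR 1 := by
  have hNe : Nonempty (Fin R) := Fin.pos_iff_nonempty.mp hR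
  have hmono : StrictMonoOn SNR (Set.Ioc 0 1) := by
    intro x hx y hy hxy
    have hx0 : 0 < x := hx.1
    have hy0 : 0 < y := hy.1
    rw [hSNR x, hSNR y]
    -- rewrite numerator as P0 * (∑ cᵢ * (a/√(1+a²dᵢ)))²
    have hrw : ∀ a : ℝ,
        a ^ 2 * P0 * (∑ i, α i * (f i * g i) * Real.sqrt (P i) /
            Real.sqrt (1 + a ^ 2 * (f i) ^ 2 * P0)) ^ 2
        = P0 * (∑ i, α i * (f i * g i) * Real.sqrt (P i) *
            (a / Real.sqrt (1 + a ^ 2 * (f i) ^ 2 * P0))) ^ 2 := by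
      intro a
      have : ∑ i, α i * (f i * g i) * Real.sqrt (P i) *
            (a / Real.sqrt (1 + a ^ 2 * (f i) ^ 2 * P0))
          = a * ∑ i, α i * (f i * g i) * Real.sqrt (P i) /
            Real.sqrt (1 + a ^ 2 * (f i) ^ 2 * P0) := by
        rw [Finset.mul_sum]
        refine Finset.sum_congr rfl fun i _ => by ring
      rw [this]; ring
    rw [hrw x, hrw y]
    have hc : ∀ i, 0 < α i * (f i * g i) * Real.sqrt (P i) := fun i =>
      mul_pos (mul_pos (hα i).1 (mul_pos (hf i) (hg i))) (Real.sqrt_pos.mpr (hP i))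
    -- numerator sums
    have hT : (∑ i, α i * (f i * g i) * Real.sqrt (P i) *
            (x / Real.sqrt (1 + x ^ 2 * (f i) ^ 2 * P0)))
        < ∑ i, α i * (f i * g i) * Real.sqrt (P i) *
            (y / Real.sqrt (1 + y ^ 2 * (f i) ^ 2 * P0)) := by
      refine Finset.sum_lt_sum_of_nonempty (Finset.univ_nonempty_iff.mpr hNe) fun i _ => ?_
      exact mul_lt_mul_of_pos_left (aux_frac (pow_pos (hf i) 2) hP0 hx0 hxy) (hc i)
    have hTx : 0 < ∑ i, α i * (f i * g i) * Real.sqrt (P i) *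
            (x / Real.sqrt (1 + x ^ 2 * (f i) ^ 2 * P0)) := by
      refine Finset.sum_pos (fun i _ => ?_) (Finset.univ_nonempty_iff.mpr hNe)
      have hs : 0 < Real.sqrt (1 + x ^ 2 * (f i) ^ 2 * P0) :=
        Real.sqrt_pos.mpr (by positivity)
      exact mul_pos (hc i) (div_pos hx0 hs)
    have hN : P0 * (∑ i, α i * (f i * g i) * Real.sqrt (P i) *
            (x / Real.sqrt (1 + x ^ 2 * (f i) ^ 2 * P0))) ^ 2
        < P0 * (∑ i, α i * (f i * g i) * Real.sqrt (P i) *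
            (y / Real.sqrt (1 + y ^ 2 * (f i) ^ 2 * P0))) ^ 2 :=
      mul_lt_mul_of_pos_left (pow_lt_pow_left₀ hT hTx.le two_ne_zero) hP0
    -- denominator
    have hD : (1 + ∑ i, (α i) ^ 2 * (g i) ^ 2 * P i / (1 + y ^ 2 * (f i) ^ 2 * P0))
        < 1 + ∑ i, (α i) ^ 2 * (g i) ^ 2 * P i / (1 + x ^ 2 * (f i) ^ 2 * P0) := by
      have : (∑ i, (α i) ^ 2 * (g i) ^ 2 * P i / (1 + y ^ 2 * (f i) ^ 2 * P0))
          < ∑ i, (α i) ^ 2 * (g i) ^ 2 * P i / (1 + x ^ 2 * (f i) ^ 2 * P0) := by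
        refine Finset.sum_lt_sum_of_nonempty (Finset.univ_nonempty_iff.mpr hNe) fun i _ => ?_
        have hnum : 0 < (α i) ^ 2 * (g i) ^ 2 * P i :=
          mul_pos (mul_pos (pow_pos (hα i).1 2) (pow_pos (hg i) 2)) (hP i)
        have hden : 1 + x ^ 2 * (f i) ^ 2 * P0 < 1 + y ^ 2 * (f i) ^ 2 * P0 := by
          have hsq : x ^ 2 < y ^ 2 := by nlinarith
          have hcp : 0 < (f i) ^ 2 * P0 := mul_pos (pow_pos (hf i) 2) hP0
          nlinarith [mul_lt_mul_of_pos_right hsq hcp]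
        have hdx : 0 < 1 + x ^ 2 * (f i) ^ 2 * P0 := by
          have := mul_pos (mul_pos (pow_pos hx0 2) (pow_pos (hf i) 2)) hP0
          linarith
        exact div_lt_div_of_pos_left hnum hdx hden
      linarith
    have hDx : 0 < 1 + ∑ i, (α i) ^ 2 * (g i) ^ 2 * P i / (1 + x ^ 2 * (f i) ^ 2 * P0) := by
      have : 0 ≤ ∑ i, (α i) ^ 2 * (g i) ^ 2 * P i / (1 + x ^ 2 * (f i) ^ 2 * P0) := by
        refine Finset.sum_nonneg fun i _ => ?_
        have := (hP i).le; positivity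
      linarith
    have hDy : 0 < 1 + ∑ i, (α i) ^ 2 * (g i) ^ 2 * P i / (1 + y ^ 2 * (f i) ^ 2 * P0) := by
      have : 0 ≤ ∑ i, (α i) ^ 2 * (g i) ^ 2 * P i / (1 + y ^ 2 * (f i) ^ 2 * P0) := by
        refine Finset.sum_nonneg fun i _ => ?_
        have := (hP i).le; positivity
      linarith
    rw [div_lt_div_iff₀ hDx hDy]
    have hNx : 0 < P0 * (∑ i, α i * (f i * g i) * Real.sqrt (P i) *
            (x / Real.sqrt (1 + x ^ 2 * (f i) ^ 2 * P0))) ^ 2 := by positivity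
    nlinarith [mul_lt_mul_of_pos_left hD (hNx.trans hN)]
  refine ⟨hmono, fun a0 ha => ?_⟩
  rcases eq_or_lt_of_le ha.2 with h | h
  · rw [h]
  · exact (hmono ha ⟨one_pos, le_refl 1⟩ h).le
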